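/- The 15 geometric hyperplanes of C(D̃₄) other than {0,1,3,4}, together with the 35 three-point Veldkamp lines, form a point-line geometry isomorphic to the projective space PG(3,2): it has 15 points, 35 lines, 3 points per line, 7 lines per point, and any two distinct points lie on exactly one common line. -/

import Mathlib

open Finset

/-- A geometric hyperplane of a graph (point-line structure with lines of size two):
a proper subset `H` of the points such that every line either lies fully in `H`
or meets `H` in exactly one point. -/
def IsHyp {n : ℕ} (E : Finset (Finset (Fin n))) (H : Finset (Fin n)) : Prop :=
  H ≠ Finset.univ ∧ ∀ e ∈ E, e ⊆ H ∨ (e ∩ H).card = 1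

/-- A three-point Veldkamp line: an unordered triple of distinct geometric hyperplanes
whose third member is the complement of the symmetric difference of the other two. -/
def IsVLine {n : ℕ} (E : Finset (Finset (Fin n))) (T : Finset (Finset (Fin n))) : Prop :=
  ∃ H1 H2 H3 : Finset (Fin n), IsHyp E H1 ∧ IsHyp E H2 ∧ IsHyp E H3 ∧
    H1 ≠ H2 ∧ H1 ≠ H3 ∧ H2 ≠ H3 ∧ H3 = (symmDiff H1 H2)ᶜ ∧ T = {H1, H2, H3}
def edgesD4 : Finset (Finset (Fin 5)) := {{0,2},{1,2},{2,3},{2,4}}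

/-- The point set: all geometric hyperplanes of `C(D̃₄)` except `{0,1,3,4}`. -/
def Pts : Set (Finset (Fin 5)) :=
  {H | IsHyp edgesD4 H ∧ H ≠ ({0,1,3,4} : Finset (Fin 5))}

/-- The line set: the three-point Veldkamp lines of `C(D̃₄)`. -/
def Lns : Set (Finset (Finset (Fin 5))) := {T | IsVLine edgesD4 T}


instance instDecIsHyp {n : ℕ} (E : Finset (Finset (Fin n))) : DecidablePred (IsHyp E) := by
  unfold IsHyp; infer_instance

def hypList : List (Finset (Fin 5)) :=
  [{2}, {0,2}, {1,2}, {0,1,2}, {2,3}, {0,2,3}, {1,2,3}, {0,1,2,3}, {2,4}, {0,2,4},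
   {1,2,4}, {0,1,2,4}, {0,1,3,4}, {2,3,4}, {0,2,3,4}, {1,2,3,4}]

set_option maxRecDepth 100000 in
lemma hypList_nodup : hypList.Nodup := by decide

def HypL : Finset (Finset (Fin 5)) := ⟨Multiset.ofList hypList, hypList_nodup⟩

def ptsList : List (Finset (Fin 5)) :=
  [{2}, {0,2}, {1,2}, {0,1,2}, {2,3}, {0,2,3}, {1,2,3}, {0,1,2,3}, {2,4}, {0,2,4}, {1,2,4}, {0,1,2,4}, {2,3,4}, {0,2,3,4}, {1,2,3,4}]

set_option maxRecDepth 100000 in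
lemma ptsList_nodup : ptsList.Nodup := by decide

def PtsL : Finset (Finset (Fin 5)) := ⟨Multiset.ofList ptsList, ptsList_nodup⟩


def LnsLlist : List (Finset (Finset (Fin 5))) :=
  [{{2,4}, {2,3}, {0,1,2}},
   {{2,4}, {0,2,3}, {1,2}},
   {{2,4}, {1,2,3}, {0,2}},
   {{2,4}, {0,1,2,3}, {2}},
   {{0,2,4}, {2,3}, {1,2}},
   {{0,2,4}, {0,2,3}, {0,1,2}},
   {{0,2,4}, {1,2,3}, {2}},
   {{0,2,4}, {0,1,2,3}, {0,2}},
   {{1,2,4}, {2,3}, {0,2}},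
   {{1,2,4}, {0,2,3}, {2}},
   {{1,2,4}, {1,2,3}, {0,1,2}},
   {{1,2,4}, {0,1,2,3}, {1,2}},
   {{0,1,2,4}, {2,3}, {2}},
   {{0,1,2,4}, {0,2,3}, {0,2}},
   {{0,1,2,4}, {1,2,3}, {1,2}},
   {{0,1,2,4}, {0,1,2,3}, {0,1,2}},
   {{2,3,4}, {1,2}, {0,2}},
   {{2,3,4}, {0,1,2}, {2}},
   {{2,3,4}, {1,2,3}, {0,2,3}},
   {{2,3,4}, {0,1,2,3}, {2,3}},
   {{2,3,4}, {1,2,4}, {0,2,4}},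
   {{2,3,4}, {0,1,2,4}, {2,4}},
   {{0,2,3,4}, {1,2}, {2}},
   {{0,2,3,4}, {0,1,2}, {0,2}},
   {{0,2,3,4}, {1,2,3}, {2,3}},
   {{0,2,3,4}, {0,1,2,3}, {0,2,3}},
   {{0,2,3,4}, {1,2,4}, {2,4}},
   {{0,2,3,4}, {0,1,2,4}, {0,2,4}},
   {{1,2,3,4}, {0,2}, {2}},
   {{1,2,3,4}, {0,1,2}, {1,2}},
   {{1,2,3,4}, {0,2,3}, {2,3}},
   {{1,2,3,4}, {0,1,2,3}, {1,2,3}},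
   {{1,2,3,4}, {0,2,4}, {2,4}},
   {{1,2,3,4}, {0,1,2,4}, {1,2,4}},
   {{1,2,3,4}, {0,2,3,4}, {2,3,4}}]

def pairList : List (Finset (Fin 5) × Finset (Fin 5)) :=
  [({2,4}, {2,3}),
   ({2,4}, {0,2,3}),
   ({2,4}, {1,2,3}),
   ({2,4}, {0,1,2,3}),
   ({0,2,4}, {2,3}),
   ({0,2,4}, {0,2,3}),
   ({0,2,4}, {1,2,3}),
   ({0,2,4}, {0,1,2,3}),
   ({1,2,4}, {2,3}),
   ({1,2,4}, {0,2,3}),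
   ({1,2,4}, {1,2,3}),
   ({1,2,4}, {0,1,2,3}),
   ({0,1,2,4}, {2,3}),
   ({0,1,2,4}, {0,2,3}),
   ({0,1,2,4}, {1,2,3}),
   ({0,1,2,4}, {0,1,2,3}),
   ({2,3,4}, {1,2}),
   ({2,3,4}, {0,1,2}),
   ({2,3,4}, {1,2,3}),
   ({2,3,4}, {0,1,2,3}),
   ({2,3,4}, {1,2,4}),
   ({2,3,4}, {0,1,2,4}),
   ({0,2,3,4}, {1,2}),
   ({0,2,3,4}, {0,1,2}),
   ({0,2,3,4}, {1,2,3}),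
   ({0,2,3,4}, {0,1,2,3}),
   ({0,2,3,4}, {1,2,4}),
   ({0,2,3,4}, {0,1,2,4}),
   ({1,2,3,4}, {0,2}),
   ({1,2,3,4}, {0,1,2}),
   ({1,2,3,4}, {0,2,3}),
   ({1,2,3,4}, {0,1,2,3}),
   ({1,2,3,4}, {0,2,4}),
   ({1,2,3,4}, {0,1,2,4}),
   ({1,2,3,4}, {0,2,3,4})]

set_option maxRecDepth 100000 in
set_option maxHeartbeats 4000000 in
lemma LnsLlist_nodup : LnsLlist.Nodup := by decide

def LnsL : Finset (Finset (Finset (Fin 5))) := ⟨Multiset.ofList LnsLlist, LnsLlist_nodup⟩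

set_option maxRecDepth 100000 in
lemma mem_HypL_iff (H : Finset (Fin 5)) : H ∈ HypL ↔ IsHyp edgesD4 H := by
  have : HypL = univ.filter (IsHyp edgesD4) := by decide
  rw [this]; simp

set_option maxRecDepth 100000 in
lemma mem_PtsL_iff : ∀ H : Finset (Fin 5),
    H ∈ PtsL ↔ H ∈ HypL ∧ H ≠ ({0,1,3,4} : Finset (Fin 5)) := by decide

lemma Pts_eq : Pts = ↑PtsL := by
  ext H
  simp only [Pts, Set.mem_setOf_eq, mem_coe, mem_PtsL_iff, mem_HypL_iff]

set_option maxRecDepth 100000 in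
set_option maxHeartbeats 1000000 in
lemma mp_aux : ∀ a ∈ HypL, ∀ b ∈ HypL, a ≠ b → (symmDiff a b)ᶜ ∈ HypL →
    a ≠ (symmDiff a b)ᶜ → b ≠ (symmDiff a b)ᶜ →
    ({a, b, (symmDiff a b)ᶜ} : Finset (Finset (Fin 5))) ∈ LnsL := by decide

def pairRel (p : Finset (Fin 5) × Finset (Fin 5)) (T : Finset (Finset (Fin 5))) : Prop :=
  p.1 ∈ HypL ∧ p.2 ∈ HypL ∧ p.1 ≠ p.2 ∧ (symmDiff p.1 p.2)ᶜ ∈ HypL ∧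
  p.1 ≠ (symmDiff p.1 p.2)ᶜ ∧ p.2 ≠ (symmDiff p.1 p.2)ᶜ ∧ T = {p.1, p.2, (symmDiff p.1 p.2)ᶜ}

instance : ∀ p T, Decidable (pairRel p T) := fun p T => by unfold pairRel; infer_instance

set_option maxRecDepth 100000 in
set_option maxHeartbeats 4000000 in
lemma forall2_pairs : List.Forall₂ pairRel pairList LnsLlist := by decide

lemma forall2_mem {α β : Type*} {R : α → β → Prop} :
    ∀ {l1 : List α} {l2 : List β}, List.Forall₂ R l1 l2 → ∀ b ∈ l2, ∃ a, R a b := by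
  intro l1 l2 h
  induction h with
  | nil => simp
  | @cons a b l1' l2' hab _ ih =>
    intro x hx
    rcases List.mem_cons.1 hx with rfl | hx
    · exact ⟨a, hab⟩
    · exact ih x hx

lemma mpr_aux : ∀ T ∈ LnsL, ∃ a b, pairRel (a, b) T := by
  intro T hT
  have hT' : T ∈ LnsLlist := by
    exact (Finset.mem_mk.trans Multiset.mem_coe).1 hT
  obtain ⟨⟨a, b⟩, hab⟩ := forall2_mem forall2_pairs T hT'
  exact ⟨a, b, hab⟩

lemma Lns_eq : Lns = ↑LnsL := by
  ext T
  simp only [Lns, Set.mem_setOf_eq, mem_coe]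
  constructor
  · rintro ⟨a, b, c, h1, h2, h3, d1, d2, d3, rfl, rfl⟩
    exact mp_aux a ((mem_HypL_iff a).2 h1) b ((mem_HypL_iff b).2 h2) d1
      ((mem_HypL_iff _).2 h3) d2 d3
  · intro hT
    obtain ⟨a, b, ha, hb, d1, hc, d2, d3, hT'⟩ := mpr_aux T hT
    exact ⟨a, b, (symmDiff a b)ᶜ, (mem_HypL_iff a).1 ha, (mem_HypL_iff b).1 hb,
      (mem_HypL_iff _).1 hc, d1, d2, d3, rfl, hT'⟩


lemma mem_PtsL_list {H : Finset (Fin 5)} : H ∈ PtsL ↔ H ∈ ptsList :=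
  Finset.mem_mk.trans Multiset.mem_coe

lemma mem_LnsL_list {T : Finset (Finset (Fin 5))} : T ∈ LnsL ↔ T ∈ LnsLlist :=
  Finset.mem_mk.trans Multiset.mem_coe

lemma myFilterCard {α : Type*} (l : List α) (h : (Multiset.ofList l).Nodup)
    (p : α → Prop) [DecidablePred p] :
    ((⟨Multiset.ofList l, h⟩ : Finset α).filter p).card
      = (l.filter (fun a => decide (p a))).length := by
  simp [Finset.filter, Finset.card, Multiset.filter_coe]

set_option maxRecDepth 1000000 in
lemma dec1 : PtsL.card = 15 := by decide

set_option maxRecDepth 1000000 in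
lemma dec2 : LnsL.card = 35 := by decide

set_option maxRecDepth 1000000 in
set_option maxHeartbeats 4000000 in
lemma dec3 : (LnsLlist.all (fun T =>
    decide (T.card = 3) && decide (∀ H ∈ T, H ∈ PtsL))) = true := by decide

set_option maxRecDepth 1000000 in
set_option maxHeartbeats 4000000 in
lemma dec4 : (ptsList.all (fun H =>
    (LnsLlist.filter (fun T => decide (H ∈ T))).length == 7)) = true := by decide

set_option maxRecDepth 1000000 in
set_option maxHeartbeats 8000000 in
lemma dec5 : (ptsList.all (fun H1 => ptsList.all (fun H2 =>
    (H1 == H2) ||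
    ((LnsLlist.filter (fun T => decide (H1 ∈ T ∧ H2 ∈ T))).length == 1)))) = true := by
  decide

theorem stmt6 :
    Pts.ncard = 15 ∧ Lns.ncard = 35 ∧
    (∀ T ∈ Lns, T.card = 3 ∧ ∀ H ∈ T, H ∈ Pts) ∧
    (∀ H ∈ Pts, {T ∈ Lns | H ∈ T}.ncard = 7) ∧
    (∀ H1 ∈ Pts, ∀ H2 ∈ Pts, H1 ≠ H2 →
      {T ∈ Lns | H1 ∈ T ∧ H2 ∈ T}.ncard = 1) := by
  have hP : ∀ H, H ∈ Pts ↔ H ∈ PtsL := fun H => by rw [Pts_eq]; simp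
  have hL : ∀ T, T ∈ Lns ↔ T ∈ LnsL := fun T => by rw [Lns_eq]; simp
  refine ⟨by rw [Pts_eq, Set.ncard_coe_finset]; exact dec1,
    by rw [Lns_eq, Set.ncard_coe_finset]; exact dec2, ?_, ?_, ?_⟩
  · intro T hT
    have hT' : T ∈ LnsLlist := mem_LnsL_list.1 ((hL T).1 hT)
    have h3 := List.all_eq_true.1 dec3 T hT'
    rw [Bool.and_eq_true, decide_eq_true_eq, decide_eq_true_eq] at h3
    exact ⟨h3.1, fun H hH => (hP H).2 (h3.2 H hH)⟩
  · intro H hH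
    have hH' : H ∈ ptsList := mem_PtsL_list.1 ((hP H).1 hH)
    have he : {T ∈ Lns | H ∈ T} = ↑(LnsL.filter (fun T => H ∈ T)) := by
      ext T; simp [hL T]
    rw [he, Set.ncard_coe_finset]; erw [myFilterCard LnsLlist LnsLlist_nodup]
    exact beq_iff_eq.1 (List.all_eq_true.1 dec4 H hH')
  · intro H1 h1 H2 h2 hne
    have h1' : H1 ∈ ptsList := mem_PtsL_list.1 ((hP H1).1 h1)
    have h2' : H2 ∈ ptsList := mem_PtsL_list.1 ((hP H2).1 h2)
    have he : {T ∈ Lns | H1 ∈ T ∧ H2 ∈ T}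
        = ↑(LnsL.filter (fun T => H1 ∈ T ∧ H2 ∈ T)) := by
      ext T; simp only [Set.mem_setOf_eq, hL T, coe_filter, mem_coe]
    rw [he, Set.ncard_coe_finset]; erw [myFilterCard LnsLlist LnsLlist_nodup]
    have h5 := List.all_eq_true.1 (List.all_eq_true.1 dec5 H1 h1') H2 h2'
    rw [Bool.or_eq_true, beq_iff_eq] at h5
    rcases h5 with h5 | h5
    · exact absurd h5 hne
    · exact beq_iff_eq.1 h5
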